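/- Soundness of k-complete families (second inequality of Lemma 12): suppose F'ᵢ satisfies |F'ᵢ| = |Fᵢ|, d_H(Fᵢ,F'ᵢ) − ½·#_$(F'ᵢ) ≤ dᵢ (for i = 1,2, with dᵢ half-integers) and ⌊d₁+d₂⌋ ≤ d. Then LCP(F'₁,F'₂) ≤ LCP_d(F₁,F₂). -/

import Mathlib

/-- Hamming distance between the aligned parts of two lists. -/
def hdistL {α : Type*} [DecidableEq α] (A B : List α) : ℕ :=
  (A.zip B).countP (fun pr => decide (pr.1 ≠ pr.2))

/-- Longest common prefix with at most `d` mismatches. -/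
def LCPd {α : Type*} [DecidableEq α] (d : ℕ) (U V : List α) : ℕ :=
  Nat.findGreatest (fun p => hdistL (U.take p) (V.take p) ≤ d) (min U.length V.length)

/-- Number of wildcard symbols `$` (encoded as `none`) in a string over `Σ ∪ {$}`. -/
def countDollar {α : Type*} (P : List (Option α)) : ℕ :=
  P.countP (fun x => x.isNone)

/-- `(U,V)_d`-pair: strings `U', V'` over `Σ ∪ {$}` (letter `a` is `some a`, `$` is `none`)
such that `|U'| = |U|`, `|V'| = |V|`; at every position `i` beyond `LCP_d(U,V)` or where
`U[i] = V[i]` we have `U'[i] = U[i]` and `V'[i] = V[i]`; and at the remaining positions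
(`i < LCP_d(U,V)` with `U[i] ≠ V[i]`) we have `U'[i] = V'[i] ∈ {U[i], V[i], $}`.
(Positions are 0-indexed, so `i ≥ LCP_d(U,V)` corresponds to 1-indexed `i > LCP_d(U,V)`.) -/
def IsPairD {α : Type*} [DecidableEq α] (d : ℕ) (U V : List α)
    (U' V' : List (Option α)) : Prop :=
  U'.length = U.length ∧ V'.length = V.length ∧
  (∀ i : ℕ, (LCPd d U V ≤ i ∨ U[i]? = V[i]?) →
      U'[i]? = (U[i]?).map some ∧ V'[i]? = (V[i]?).map some) ∧
  (∀ i : ℕ, i < LCPd d U V → U[i]? ≠ V[i]? →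
      U'[i]? = V'[i]? ∧
      (U'[i]? = (U[i]?).map some ∨ U'[i]? = (V[i]?).map some ∨ U'[i]? = some none))

/-- soundness of `k`-complete families, second inequality of Lemma 12:
if `|F'ᵢ| = |Fᵢ|`, `d_H(Fᵢ,F'ᵢ) − ½·#_$(F'ᵢ) ≤ dᵢ` for half-integers `dᵢ` (i = 1,2) and
`⌊d₁ + d₂⌋ ≤ d`, then `LCP(F'₁,F'₂) ≤ LCP_d(F₁,F₂)`. -/
lemma hdistL_nil_left {α : Type*} [DecidableEq α] (B : List α) : hdistL [] B = 0 := rfl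
lemma hdistL_nil_right {α : Type*} [DecidableEq α] (A : List α) : hdistL A [] = 0 := by
  simp [hdistL]

lemma hdistL_cons {α : Type*} [DecidableEq α] (a b : α) (A B : List α) :
    hdistL (a :: A) (b :: B) = hdistL A B + (if a = b then 0 else 1) := by
  by_cases h : a = b <;> simp [hdistL, List.countP_cons, h]

lemma countDollar_cons_none {α : Type*} (P : List (Option α)) :
    countDollar (none :: P) = countDollar P + 1 := by
  simp [countDollar, List.countP_cons]

lemma countDollar_cons_some {α : Type*} (b : α) (P : List (Option α)) :
    countDollar (some b :: P) = countDollar P := by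
  simp [countDollar, List.countP_cons]

-- L1
lemma eq_of_hdistL_zero {α : Type*} [DecidableEq α] :
    ∀ (A B : List α), A.length = B.length → hdistL A B = 0 → A = B := by
  intro A
  induction A with
  | nil => intro B h _; simpa using h.symm
  | cons a A ih =>
    intro B h h0
    cases B with
    | nil => simp at h
    | cons b B =>
      rw [hdistL_cons] at h0
      have hab : a = b := by by_contra hc; simp [hc] at h0
      have := ih B (by simpa using h) (by omega)
      simp [hab, this]

-- L0
lemma countDollar_le_hdistL {α : Type*} [DecidableEq α] :
    ∀ (F' : List (Option α)) (F : List α), F'.length ≤ F.length →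
      countDollar F' ≤ hdistL (F.map some) F' := by
  intro F'
  induction F' with
  | nil => intro F _; simp [countDollar]
  | cons x P ih =>
    intro F h
    cases F with
    | nil => simp at h
    | cons a F =>
      have := ih F (by simpa using h)
      cases x with
      | none =>
        simp only [List.map_cons, hdistL_cons, countDollar_cons_none]
        simp only [reduceCtorEq, if_false]
        omega
      | some b =>
        simp only [List.map_cons, hdistL_cons, countDollar_cons_some]
        split <;> omega

-- L3
lemma hdistL_triangle {α : Type*} [DecidableEq α] :
    ∀ (X Y : List α) (P : List (Option α)), X.length = P.length → Y.length = P.length →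
      hdistL X Y + countDollar P ≤ hdistL (X.map some) P + hdistL (Y.map some) P := by
  intro X
  induction X with
  | nil =>
    intro Y P h1 h2
    have : P = [] := by simpa using h1.symm
    subst this
    simp [hdistL, countDollar]
  | cons x X ih =>
    intro Y P h1 h2
    cases P with
    | nil => simp at h1
    | cons c P =>
      cases Y with
      | nil => simp at h2
      | cons y Y =>
        have := ih Y P (by simpa using h1) (by simpa using h2)
        cases c with
        | none =>
          simp only [List.map_cons, hdistL_cons, countDollar_cons_none, reduceCtorEq, if_false]
          split <;> omega
        | some z =>
          have hpt : (if x = y then (0:ℕ) else 1) ≤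
              (if x = z then 0 else 1) + (if y = z then 0 else 1) := by
            split_ifs <;> simp_all <;> omega
          simp only [List.map_cons, hdistL_cons, countDollar_cons_some, Option.some.injEq]
          omega

lemma zip_take {α β : Type*} : ∀ (A : List α) (B : List β) (n : ℕ),
    (A.take n).zip (B.take n) = (A.zip B).take n := by
  intro A
  induction A with
  | nil => intros; simp
  | cons a A ih =>
    intro B n
    cases B with
    | nil => simp
    | cons b B =>
      cases n with
      | zero => simp
      | succ n => simp [ih]

-- split of hdistL along take/drop, when lengths equal
lemma hdistL_take_add_drop {α : Type*} [DecidableEq α] (A B : List α)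
    (h : A.length = B.length) (p : ℕ) :
    hdistL A B = hdistL (A.take p) (B.take p) + hdistL (A.drop p) (B.drop p) := by
  have hz : A.zip B = (A.take p).zip (B.take p) ++ (A.drop p).zip (B.drop p) := by
    conv_lhs => rw [← List.take_append_drop p A, ← List.take_append_drop p B]
    rw [List.zip_append (by simp [h])]
  simp only [hdistL, hz, List.countP_append]

lemma countDollar_take_add_drop {α : Type*} (P : List (Option α)) (p : ℕ) :
    countDollar P = countDollar (P.take p) + countDollar (P.drop p) := by
  conv_lhs => rw [← List.take_append_drop p P]
  simp only [countDollar, List.countP_append]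

-- L4
lemma take_bound {α : Type*} [DecidableEq α] (F : List α) (F' : List (Option α))
    (h : F'.length = F.length) (p : ℕ) :
    hdistL ((F.map some).take p) (F'.take p) + countDollar F' ≤
      hdistL (F.map some) F' + countDollar (F'.take p) := by
  rw [hdistL_take_add_drop (F.map some) F' (by simp [h]) p,
      countDollar_take_add_drop F' p]
  have := countDollar_le_hdistL (F'.drop p) (F.drop p) (by simp [h])
  rw [List.map_drop] at this
  omega

theorem kComplete_soundness {α : Type*} [DecidableEq α]
    (F₁ F₂ : List α) (F₁' F₂' : List (Option α)) (d₁ d₂ : ℚ) (d : ℕ)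
    (hl₁ : F₁'.length = F₁.length) (hl₂ : F₂'.length = F₂.length)
    (hhalf₁ : ∃ m : ℤ, d₁ = (m : ℚ) / 2) (hhalf₂ : ∃ m : ℤ, d₂ = (m : ℚ) / 2)
    (hd₁ : (hdistL (F₁.map some) F₁' : ℚ) - (countDollar F₁' : ℚ) / 2 ≤ d₁)
    (hd₂ : (hdistL (F₂.map some) F₂' : ℚ) - (countDollar F₂' : ℚ) / 2 ≤ d₂)
    (hfloor : ⌊d₁ + d₂⌋ ≤ (d : ℤ)) :
    LCPd 0 F₁' F₂' ≤ LCPd d F₁ F₂ := by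
  set p := LCPd 0 F₁' F₂' with hp
  rcases Nat.eq_zero_or_pos p with h0 | h0
  · simp [h0]
  have hple : p ≤ min F₁'.length F₂'.length := Nat.findGreatest_le _
  have hfg : Nat.findGreatest (fun q => hdistL (F₁'.take q) (F₂'.take q) ≤ 0)
      (min F₁'.length F₂'.length) = p := by rw [hp, LCPd]
  have hspec : hdistL (F₁'.take p) (F₂'.take p) ≤ 0 :=
    Nat.findGreatest_of_ne_zero
      (P := fun q => hdistL (F₁'.take q) (F₂'.take q) ≤ 0) hfg (by omega)
  have hPeq : F₁'.take p = F₂'.take p := by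
    apply eq_of_hdistL_zero
    · rw [List.length_take, List.length_take]; omega
    · omega
  -- bound the hamming distance of the prefixes of F₁, F₂
  have h3 := hdistL_triangle (F₁.take p) (F₂.take p) (F₁'.take p)
      (by rw [List.length_take, List.length_take]; omega)
      (by rw [hPeq, List.length_take, List.length_take]; omega)
  rw [hPeq] at h3
  nth_rewrite 2 [← hPeq] at h3
  have h4 := take_bound F₁ F₁' hl₁ p
  have h5 := take_bound F₂ F₂' hl₂ p
  rw [← List.map_take] at h4 h5
  rw [← hPeq] at h3
  have hD1 : countDollar (F₁'.take p) ≤ countDollar F₁' :=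
    List.Sublist.countP_le (List.take_sublist p F₁')
  have hD2 : countDollar (F₂'.take p) ≤ countDollar F₂' :=
    List.Sublist.countP_le (List.take_sublist p F₂')
  rw [← hPeq] at hD2
  -- combine in ℚ
  have hq : (hdistL (F₁.take p) (F₂.take p) : ℚ) ≤ d₁ + d₂ := by
    have c3 : ((hdistL (F₁.take p) (F₂.take p) : ℕ) : ℚ) + (countDollar (F₁'.take p) : ℚ) ≤
        (hdistL ((F₁.take p).map some) (F₁'.take p) : ℚ) +
        (hdistL ((F₂.take p).map some) (F₁'.take p) : ℚ) := by exact_mod_cast h3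
    have c4 : (hdistL ((F₁.take p).map some) (F₁'.take p) : ℚ) + (countDollar F₁' : ℚ) ≤
        (hdistL (F₁.map some) F₁' : ℚ) + (countDollar (F₁'.take p) : ℚ) := by exact_mod_cast h4
    have c5 : (hdistL ((F₂.take p).map some) (F₁'.take p) : ℚ) + (countDollar F₂' : ℚ) ≤
        (hdistL (F₂.map some) F₂' : ℚ) + (countDollar (F₁'.take p) : ℚ) := by
      rw [hPeq]; exact_mod_cast h5
    have cD1 : (countDollar (F₁'.take p) : ℚ) ≤ (countDollar F₁' : ℚ) := by exact_mod_cast hD1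
    have cD2 : (countDollar (F₁'.take p) : ℚ) ≤ (countDollar F₂' : ℚ) := by exact_mod_cast hD2
    linarith
  have hnat : hdistL (F₁.take p) (F₂.take p) ≤ d := by
    have : ((hdistL (F₁.take p) (F₂.take p) : ℕ) : ℤ) ≤ ⌊d₁ + d₂⌋ := by
      rw [Int.le_floor]; exact_mod_cast hq
    omega
  exact Nat.le_findGreatest (by omega) hnat
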